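/- If there is a fine, countably complete ultrafilter on the countable subsets of ω₁, then there exists a countably complete nonprincipal ultrafilter on ω₁ (i.e., ω₁ is a measurable cardinal in the choiceless sense). -/

import Mathlib

/-- The collection of countable subsets of `X` (the set `𝒫_{ω₁}(X)`). -/
abbrev CSub (X : Type*) := {σ : Set X // σ.Countable}

/-- An ultrafilter on `𝒫_{ω₁}(X)` is *fine* if it contains `{σ : x ∈ σ}` for every `x ∈ X`. -/
def IsFine {X : Type*} (μ : Ultrafilter (CSub X)) : Prop :=
  ∀ x : X, {σ : CSub X | x ∈ σ.1} ∈ μ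

/-- An ultrafilter is *countably complete* if it is closed under countable intersections. -/
def IsCountablyComplete {α : Type*} (μ : Ultrafilter α) : Prop :=
  ∀ A : ℕ → Set α, (∀ n, A n ∈ μ) → (⋂ n, A n) ∈ μ

/-- `ω₁`, realized as the type of ordinals below `(aleph 1).ord`. -/
abbrev Omega1 := {o : Ordinal // o < (Cardinal.aleph 1).ord}

universe u v

theorem ord_aleph1_lift :
    Ordinal.lift.{u, 0} (Cardinal.aleph 1).ord = (Cardinal.aleph 1).ord := by
  rw [Cardinal.lift_ord, Cardinal.lift_aleph, Ordinal.lift_one]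

/-- The supremum of a countable subset of `ω₁` is below `ω₁`. -/
theorem csub_sup_lt (σ : CSub Omega1.{u}) :
    (⨆ x : σ.1, (x : Omega1.{u}).1) < (Cardinal.aleph 1).ord := by
  rcases σ.1.eq_empty_or_nonempty with h | h
  · have : IsEmpty σ.1 := by rw [h]; exact Set.isEmpty_coe_sort.mpr rfl
    rw [ciSup_of_empty]
    rw [Cardinal.lt_ord]
    simpa using Cardinal.aleph0_lt_aleph_one.trans_le' Cardinal.aleph0_pos.le
  · obtain ⟨f, hf⟩ := σ.2.exists_eq_range h
    have hcof : Cardinal.lift.{u, 0} (Cardinal.mk ℕ) < ((Cardinal.aleph 1).ord).cof := by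
      rw [Cardinal.isRegular_aleph_one.cof_eq]
      simp [Cardinal.aleph0_lt_aleph_one]
    have hsup : (⨆ n : ℕ, (f n).1) < (Cardinal.aleph 1).ord :=
      Ordinal.iSup_lt_ord_lift hcof fun n => (f n).2
    refine lt_of_le_of_lt ?_ hsup
    have : Nonempty σ.1 := h.to_subtype
    refine ciSup_le fun x => ?_
    have hx : (x : Omega1.{u}) ∈ Set.range f := by rw [← hf]; exact x.2
    obtain ⟨n, hn⟩ := hx
    rw [← hn]
    exact Ordinal.le_iSup (fun n => (f n).1) n

/-- The sup map `CSub ω₁ → ω₁`. -/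
noncomputable def supMap (σ : CSub Omega1.{u}) : Omega1.{u} :=
  ⟨⨆ x : σ.1, (x : Omega1.{u}).1, csub_sup_lt σ⟩

/-- Transfer `ω₁` down to universe `0`. -/
noncomputable def omega1Down (x : Omega1.{u}) : Omega1.{0} := by
  have hx : x.1 < Ordinal.lift.{u, 0} (Cardinal.aleph 1).ord := by
    rw [ord_aleph1_lift]; exact x.2
  exact ⟨(Ordinal.lt_lift_iff.mp hx).choose, (Ordinal.lt_lift_iff.mp hx).choose_spec.1⟩

theorem omega1Down_spec (x : Omega1.{u}) :
    Ordinal.lift.{u, 0} (omega1Down x).1 = x.1 := by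
  have hx : x.1 < Ordinal.lift.{u, 0} (Cardinal.aleph 1).ord := by
    rw [ord_aleph1_lift]; exact x.2
  exact (Ordinal.lt_lift_iff.mp hx).choose_spec.2

/-- Transfer `ω₁` up from universe `0`. -/
def omega1Up (x : Omega1.{0}) : Omega1.{u} :=
  ⟨Ordinal.lift.{u, 0} x.1, by have := Ordinal.lift_lt.{u, 0}.mpr x.2; rwa [ord_aleph1_lift] at this⟩

theorem omega1Down_up (x : Omega1.{0}) : omega1Down (omega1Up.{u} x) = x := by
  apply Subtype.ext
  apply Ordinal.lift_inj.mp
  rw [omega1Down_spec]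
  rfl

theorem omega1Up_down (x : Omega1.{u}) : omega1Up (omega1Down x) = x := by
  apply Subtype.ext
  exact omega1Down_spec x

theorem stmt1 (μ : Ultrafilter (CSub Omega1))
    (hfine : IsFine μ) (hcc : IsCountablyComplete μ) :
    ∃ ν : Ultrafilter Omega1, IsCountablyComplete ν ∧ ∀ α : Omega1, ({α}ᶜ : Set Omega1) ∈ ν := by
  set F := fun σ => omega1Up (omega1Down (supMap σ)) with hF
  refine ⟨μ.map F, ?_, ?_⟩
  · intro A hA
    have : F ⁻¹' (⋂ n, A n) = ⋂ n, F ⁻¹' (A n) := Set.preimage_iInter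
    rw [Ultrafilter.mem_map, this]
    exact hcc _ fun n => (Ultrafilter.mem_map).mp (hA n)
  · intro α
    rw [Ultrafilter.mem_map]
    set β := omega1Up (omega1Down α) with hβ
    have hsucc : β.1 + 1 < (Cardinal.aleph 1).ord :=
      (Cardinal.isSuccLimit_ord (Cardinal.aleph0_le_aleph 1)).add_one_lt β.2
    refine μ.toFilter.mem_of_superset (hfine ⟨β.1 + 1, hsucc⟩) ?_
    intro σ hσ
    have : Countable σ.1 := σ.2.to_subtype
    have hle : β.1 + 1 ≤ (supMap σ).1 :=
      Ordinal.le_iSup (fun x : σ.1 => (x : Omega1).1) ⟨_, hσ⟩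
    simp only [Set.mem_preimage, Set.mem_compl_iff, Set.mem_singleton_iff]
    intro h
    have hβα : omega1Down β = omega1Down α := by rw [hβ, omega1Down_up]
    have hne : supMap σ ≠ β := by
      intro hs
      rw [hs] at hle
      exact absurd hle (by simpa using (Order.lt_succ β.1))
    apply hne
    have : omega1Down (supMap σ) = omega1Down β := by
      rw [hβα, ← h, hF]
      exact (omega1Down_up _).symm
    calc supMap σ = omega1Up (omega1Down (supMap σ)) := (omega1Up_down _).symm
      _ = omega1Up (omega1Down β) := by rw [this]
      _ = β := omega1Up_down _
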